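/- Let A, B, C ∈ ℝ² be collinear points and c > 0 be such that min{‖A−B‖, ‖A−C‖, ‖B−C‖, 2} ≥ 2c, and let a > 0 satisfy a < c²/20. Then for every b ∈ [1/2, 2], the set W(b) := {x ∈ ℝ² : b−a ≤ ‖x−A‖ ≤ b+a, b−a ≤ ‖x−B‖ ≤ b+a, and b−a ≤ ‖x−C‖ ≤ b+a} is empty. -/

import Mathlib

open scoped ENNReal
open MeasureTheory Metric Set

private lemma quad_mid' (β γ c m M s1 s2 s3 : ℝ) (hc : 0 < c)
    (h12 : s1 + 2*c ≤ s2) (h23 : s2 + 2*c ≤ s3)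
    (h1 : s1^2 + β*s1 + γ ≤ M) (h2 : m ≤ s2^2 + β*s2 + γ)
    (h3 : s3^2 + β*s3 + γ ≤ M) : m + 4*c^2 ≤ M := by
  nlinarith [mul_nonneg (by linarith : (0:ℝ) ≤ s3 - s2) (by linarith : (0:ℝ) ≤ M - (s1^2 + β*s1 + γ)),
    mul_nonneg (by linarith : (0:ℝ) ≤ s2 - s1) (by linarith : (0:ℝ) ≤ M - (s3^2 + β*s3 + γ)),
    mul_nonneg (by linarith : (0:ℝ) ≤ s3 - s1) (by linarith : (0:ℝ) ≤ (s2^2 + β*s2 + γ) - m),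
    mul_le_mul (by linarith : 2*c ≤ s2 - s1) (by linarith : 2*c ≤ s3 - s2) (by linarith) (by linarith),
    (by linarith : 4*c ≤ s3 - s1), hc.le]

private lemma quad_sym' (β γ c m M s1 s2 s3 : ℝ) (hc : 0 < c)
    (h12 : 2*c ≤ |s1 - s2|) (h13 : 2*c ≤ |s1 - s3|) (h23 : 2*c ≤ |s2 - s3|)
    (hm1 : m ≤ s1^2 + β*s1 + γ) (hM1 : s1^2 + β*s1 + γ ≤ M)
    (hm2 : m ≤ s2^2 + β*s2 + γ) (hM2 : s2^2 + β*s2 + γ ≤ M)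
    (hm3 : m ≤ s3^2 + β*s3 + γ) (hM3 : s3^2 + β*s3 + γ ≤ M) : m + 4*c^2 ≤ M := by
  have H12 : s1 + 2*c ≤ s2 ∨ s2 + 2*c ≤ s1 := by
    rcases abs_cases (s1 - s2) with ⟨h, _⟩ | ⟨h, _⟩
    · right; linarith
    · left; linarith
  have H13 : s1 + 2*c ≤ s3 ∨ s3 + 2*c ≤ s1 := by
    rcases abs_cases (s1 - s3) with ⟨h, _⟩ | ⟨h, _⟩
    · right; linarith
    · left; linarith
  have H23 : s2 + 2*c ≤ s3 ∨ s3 + 2*c ≤ s2 := by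
    rcases abs_cases (s2 - s3) with ⟨h, _⟩ | ⟨h, _⟩
    · right; linarith
    · left; linarith
  rcases H12 with h12' | h12' <;> rcases H13 with h13' | h13' <;> rcases H23 with h23' | h23' <;>
    first
      | exact quad_mid' β γ c m M s1 s2 s3 hc (by linarith) (by linarith) hM1 hm2 hM3
      | exact quad_mid' β γ c m M s1 s3 s2 hc (by linarith) (by linarith) hM1 hm3 hM2
      | exact quad_mid' β γ c m M s2 s1 s3 hc (by linarith) (by linarith) hM2 hm1 hM3
      | exact quad_mid' β γ c m M s2 s3 s1 hc (by linarith) (by linarith) hM2 hm3 hM1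
      | exact quad_mid' β γ c m M s3 s1 s2 hc (by linarith) (by linarith) hM3 hm1 hM2
      | exact quad_mid' β γ c m M s3 s2 s1 hc (by linarith) (by linarith) hM3 hm2 hM1

private lemma quad_val (w v : EuclideanSpace ℝ (Fin 2)) (r : ℝ) (hv : 0 < ‖v‖) :
    ‖w - r • v‖^2 = (r * ‖v‖)^2 + (-2 * (inner ℝ w v : ℝ) / ‖v‖) * (r * ‖v‖) + ‖w‖^2 := by
  rw [@norm_sub_sq_real (EuclideanSpace ℝ (Fin 2)) _ _ w (r • v), real_inner_smul_right,
    norm_smul, Real.norm_eq_abs, mul_pow, sq_abs]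
  field_simp
  ring

/-- **Degenerate case of the three-annuli lemma.** If `A, B, C ∈ ℝ²` are collinear,
`min {‖A−B‖, ‖A−C‖, ‖B−C‖, 2} ≥ 2c` and `0 < a < c²/20`, then for every `b ∈ [1/2, 2]` the
intersection `W(b)` of the three closed annuli of radii `[b−a, b+a]` centered at `A`, `B`,
`C` is empty. -/
theorem three_annuli_empty_of_collinear
    (A B C : EuclideanSpace ℝ (Fin 2)) (c a : ℝ)
    (hcol : Collinear ℝ ({A, B, C} : Set (EuclideanSpace ℝ (Fin 2))))
    (hc0 : 0 < c)
    (hsep : 2 * c ≤ min (min (‖A - B‖) (‖A - C‖)) (min (‖B - C‖) 2))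
    (ha0 : 0 < a) (ha : a < c ^ 2 / 20) :
    ∀ b ∈ Set.Icc (1 / 2 : ℝ) 2,
      {x : EuclideanSpace ℝ (Fin 2) |
          (b - a ≤ ‖x - A‖ ∧ ‖x - A‖ ≤ b + a) ∧
          (b - a ≤ ‖x - B‖ ∧ ‖x - B‖ ≤ b + a) ∧
          (b - a ≤ ‖x - C‖ ∧ ‖x - C‖ ≤ b + a)} = ∅ := by
  intro b hb
  rw [Set.eq_empty_iff_forall_notMem]
  rintro x ⟨⟨hA1, hA2⟩, ⟨hB1, hB2⟩, ⟨hC1, hC2⟩⟩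
  have hAB : 2*c ≤ ‖A - B‖ := le_trans hsep (le_trans (min_le_left _ _) (min_le_left _ _))
  have hAC : 2*c ≤ ‖A - C‖ := le_trans hsep (le_trans (min_le_left _ _) (min_le_right _ _))
  have hBC : 2*c ≤ ‖B - C‖ := le_trans hsep (le_trans (min_le_right _ _) (min_le_left _ _))
  have hc1 : c ≤ 1 := by
    have : 2*c ≤ 2 := le_trans hsep (le_trans (min_le_right _ _) (min_le_right _ _))
    linarith
  have ha20 : a < 1/20 := by nlinarith
  obtain ⟨v, hv⟩ := (collinear_iff_of_mem
    (show A ∈ ({A,B,C} : Set (EuclideanSpace ℝ (Fin 2))) by simp)).1 hcol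
  obtain ⟨rB, hrB⟩ := hv B (by simp)
  obtain ⟨rC, hrC⟩ := hv C (by simp)
  rw [vadd_eq_add] at hrB hrC
  have hBA : B - A = rB • v := by rw [hrB]; abel
  have hCA : C - A = rC • v := by rw [hrC]; abel
  have hdAB : ‖A - B‖ = |rB * ‖v‖| := by
    rw [show A - B = -(B - A) by abel, norm_neg, hBA, norm_smul, Real.norm_eq_abs,
      abs_mul, abs_of_nonneg (norm_nonneg v)]
  have hdAC : ‖A - C‖ = |rC * ‖v‖| := by
    rw [show A - C = -(C - A) by abel, norm_neg, hCA, norm_smul, Real.norm_eq_abs,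
      abs_mul, abs_of_nonneg (norm_nonneg v)]
  have hdBC : ‖B - C‖ = |rB * ‖v‖ - rC * ‖v‖| := by
    rw [show B - C = (B - A) - (C - A) by abel, hBA, hCA, ← sub_smul, norm_smul,
      Real.norm_eq_abs, ← sub_mul, abs_mul, abs_of_nonneg (norm_nonneg v)]
  have hL : 0 < ‖v‖ := by
    rcases eq_or_ne v 0 with rfl | h
    · simp only [norm_zero, mul_zero, abs_zero] at hdAB; linarith
    · exact norm_pos_iff.2 h
  set w : EuclideanSpace ℝ (Fin 2) := x - A with hw
  set β : ℝ := -2 * (inner ℝ w v : ℝ) / ‖v‖ with hβ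
  set sB : ℝ := rB * ‖v‖ with hsB
  set sC : ℝ := rC * ‖v‖ with hsC
  have hxB : x - B = w - rB • v := by rw [hw, hrB]; abel
  have hxC : x - C = w - rC • v := by rw [hw, hrC]; abel
  have hfA : ‖x - A‖^2 = (0:ℝ)^2 + β * 0 + ‖w‖^2 := by rw [← hw]; ring
  have hfB : ‖x - B‖^2 = sB^2 + β * sB + ‖w‖^2 := by rw [hxB]; exact quad_val w v rB hL
  have hfC : ‖x - C‖^2 = sC^2 + β * sC + ‖w‖^2 := by rw [hxC]; exact quad_val w v rC hL
  -- bounds on squares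
  have hba : (0:ℝ) ≤ b - a := by
    have := hb.1; linarith
  have sq_lb : ∀ y : EuclideanSpace ℝ (Fin 2), b - a ≤ ‖y‖ → (b-a)^2 ≤ ‖y‖^2 := fun y h =>
    pow_le_pow_left₀ hba h 2
  have sq_ub : ∀ y : EuclideanSpace ℝ (Fin 2), ‖y‖ ≤ b + a → ‖y‖^2 ≤ (b+a)^2 := fun y h =>
    pow_le_pow_left₀ (norm_nonneg y) h 2
  have key : (b-a)^2 + 4*c^2 ≤ (b+a)^2 := by
    refine quad_sym' β (‖w‖^2) c ((b-a)^2) ((b+a)^2) 0 sB sC hc0 ?_ ?_ ?_ ?_ ?_ ?_ ?_ ?_ ?_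
    · rw [zero_sub, abs_neg, ← hdAB]; exact hAB
    · rw [zero_sub, abs_neg, ← hdAC]; exact hAC
    · rw [← hdBC]; exact hBC
    · rw [← hfA]; exact sq_lb _ hA1
    · rw [← hfA]; exact sq_ub _ hA2
    · rw [← hfB]; exact sq_lb _ hB1
    · rw [← hfB]; exact sq_ub _ hB2
    · rw [← hfC]; exact sq_lb _ hC1
    · rw [← hfC]; exact sq_ub _ hC2
  -- contradiction: 4c² ≤ 4ab ≤ 8a < 8c²/20
  have hb2 := hb.2
  nlinarith
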